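/- Let a ∈ ℝ and let q : [a,∞) → ℝ be continuously differentiable with q(x) ≥ 0 and q'(x) ≥ 0 for all x ≥ a. Let u : [a,∞) → ℝ be a C² function satisfying u''(x) = q(x) u(x) for all x ≥ a, with u, u' ∈ L²(a,∞) and q(x) u(x)² → 0 as x → +∞. Then u'(t)² ≥ q(t) u(t)² for every t ≥ a. -/

import Mathlib

open MeasureTheory Filter Set

/-- for a solution of `u'' = q u` on [a,∞) with q ≥ 0 nondecreasing (q' ≥ 0),
u, u' ∈ L²(a,∞), and `q u² → 0` at +∞, one has `u'(t)² ≥ q(t) u(t)²` for every t ≥ a. -/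
theorem derivative_dominates_potential (a : ℝ) (q q' u v w : ℝ → ℝ)
    (hq : ∀ x ∈ Set.Ici a, HasDerivWithinAt q (q' x) (Set.Ici a) x)
    (hq'cont : ContinuousOn q' (Set.Ici a))
    (hqpos : ∀ x ≥ a, 0 ≤ q x) (hq'pos : ∀ x ≥ a, 0 ≤ q' x)
    (hu : ∀ x ∈ Set.Ici a, HasDerivWithinAt u (v x) (Set.Ici a) x)
    (hv : ∀ x ∈ Set.Ici a, HasDerivWithinAt v (w x) (Set.Ici a) x)
    (hwcont : ContinuousOn w (Set.Ici a))
    (hode : ∀ x ≥ a, w x = q x * u x)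
    (hL2u : MeasureTheory.IntegrableOn (fun x => (u x) ^ 2) (Set.Ioi a))
    (hL2v : MeasureTheory.IntegrableOn (fun x => (v x) ^ 2) (Set.Ioi a))
    (hlim : Filter.Tendsto (fun x => q x * (u x) ^ 2) Filter.atTop (nhds 0)) :
    ∀ t ≥ a, q t * (u t) ^ 2 ≤ (v t) ^ 2 := by
  set F : ℝ → ℝ := fun x => v x ^ 2 - q x * u x ^ 2 with hF
  have hFderiv : ∀ x ∈ Set.Ici a,
      HasDerivWithinAt F (-(q' x * u x ^ 2)) (Set.Ici a) x := by
    intro x hx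
    have h1 : HasDerivWithinAt (fun y => v y ^ 2)
        (2 * v x ^ 1 * w x) (Set.Ici a) x := (hv x hx).pow 2
    have h2 : HasDerivWithinAt (fun y => q y * u y ^ 2)
        (q' x * u x ^ 2 + q x * (2 * u x ^ 1 * v x)) (Set.Ici a) x :=
      (hq x hx).mul ((hu x hx).pow 2)
    have h3 := h1.sub h2
    have heq : 2 * v x ^ 1 * w x - (q' x * u x ^ 2 + q x * (2 * u x ^ 1 * v x))
        = -(q' x * u x ^ 2) := by
      rw [hode x hx]; ring
    rw [heq] at h3
    exact h3
  have hFcont : ContinuousOn F (Set.Ici a) := fun x hx =>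
    (hFderiv x hx).continuousWithinAt
  have hFanti : AntitoneOn F (Set.Ici a) := by
    apply antitoneOn_of_deriv_nonpos (convex_Ici a) hFcont
    · intro x hx
      rw [interior_Ici] at hx
      exact (((hFderiv x (Set.mem_Ici.mpr (le_of_lt hx))).hasDerivAt
        (Ici_mem_nhds hx)).differentiableAt).differentiableWithinAt
    · intro x hx
      rw [interior_Ici] at hx
      rw [((hFderiv x (Set.mem_Ici.mpr (le_of_lt hx))).hasDerivAt (Ici_mem_nhds hx)).deriv]
      have := hq'pos x (le_of_lt hx)
      have := sq_nonneg (u x)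
      nlinarith
  intro t ht
  by_contra hcon
  push_neg at hcon
  set c := q t * u t ^ 2 - v t ^ 2 with hc
  have hcpos : 0 < c := by simp [hc]; linarith
  have hev : ∀ᶠ x in Filter.atTop, q x * u x ^ 2 < c :=
    hlim.eventually (gt_mem_nhds hcpos)
  obtain ⟨x, hxt, hxlt⟩ := ((Filter.eventually_ge_atTop t).and hev).exists
  have hxa : x ∈ Set.Ici a := le_trans ht hxt
  have hFle : F x ≤ F t := hFanti ht hxa hxt
  have : v x ^ 2 < 0 := by
    have : F x = v x ^ 2 - q x * u x ^ 2 := rfl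
    have hFt : F t = -c := by simp only [hF, hc]; ring
    nlinarith
  nlinarith [sq_nonneg (v x)]
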